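/- With A=A* and α=1/√a, the condition G''(α)=0 holds if and only if b=b*:=-√a(K²a-4K√a+5)/(K²a-3K√a+3); moreover b*>-2√a for all a,K with 1/√a<K<√3/√a. -/

import Mathlib

lemma dd_aux (c4 c3 c2 c1 c0 y : ℝ) :
    deriv (deriv (fun x : ℝ => c4*x^4 + c3*x^3 + c2*x^2 + c1*x + c0)) y
      = 12*c4*y^2 + 6*c3*y + 2*c2 := by
  have h1 : ∀ z : ℝ, HasDerivAt (fun x : ℝ => c4*x^4 + c3*x^3 + c2*x^2 + c1*x + c0)
      (4*c4*z^3 + 3*c3*z^2 + 2*c2*z + c1) z := by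
    intro z
    have := (((hasDerivAt_pow 4 z).const_mul c4).add
      (((hasDerivAt_pow 3 z).const_mul c3).add
      (((hasDerivAt_pow 2 z).const_mul c2).add
      (((hasDerivAt_id z).const_mul c1).add (hasDerivAt_const z c0)))))
    convert this using 1
    · rfl
    · rfl
    · ext x; simp only [id, Pi.add_apply]; ring
    · push_cast; ring
  have hd1 : deriv (fun x : ℝ => c4*x^4 + c3*x^3 + c2*x^2 + c1*x + c0)
      = fun z => 4*c4*z^3 + 3*c3*z^2 + 2*c2*z + c1 := funext fun z => (h1 z).deriv
  rw [hd1]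
  have h2 : HasDerivAt (fun z : ℝ => 4*c4*z^3 + 3*c3*z^2 + 2*c2*z + c1)
      (12*c4*y^2 + 6*c3*y + 2*c2) y := by
    have := (((hasDerivAt_pow 3 y).const_mul (4*c4)).add
      (((hasDerivAt_pow 2 y).const_mul (3*c3)).add
      (((hasDerivAt_id y).const_mul (2*c2)).add (hasDerivAt_const y c1))))
    convert this using 1
    · rfl
    · rfl
    · ext x; simp only [id, Pi.add_apply]; ring
    · push_cast; ring
  exact h2.deriv

/-- With `A = A*` and `α = 1/√a`, the condition `G''(α) = 0` holds iff
`b = b* = -√a(K²a - 4K√a + 5)/(K²a - 3K√a + 3)`; moreover `b* > -2√a`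
for all `a, K` with `1/√a < K < √3/√a`. -/
theorem stmt_8 (a K : ℝ) (ha : 0 < a)
    (hK1 : 1 / Real.sqrt a < K) (hK3 : K < Real.sqrt 3 / Real.sqrt a)
    (G : ℝ → ℝ → ℝ)
    (hG : ∀ b x, G b x =
      (x - (2 * K * Real.sqrt a - 3) / (K * a - 2 * Real.sqrt a)) * (K - x) *
        (a * x ^ 2 + b * x + 1)) :
    (∀ b : ℝ, deriv (deriv (G b)) (1 / Real.sqrt a) = 0 ↔
      b = -Real.sqrt a * (K ^ 2 * a - 4 * K * Real.sqrt a + 5) /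
            (K ^ 2 * a - 3 * K * Real.sqrt a + 3)) ∧
    -Real.sqrt a * (K ^ 2 * a - 4 * K * Real.sqrt a + 5) /
        (K ^ 2 * a - 3 * K * Real.sqrt a + 3) > -2 * Real.sqrt a := by
  obtain ⟨s, hs0, rfl⟩ : ∃ s : ℝ, 0 < s ∧ s ^ 2 = a :=
    ⟨Real.sqrt a, Real.sqrt_pos.2 ha, Real.sq_sqrt ha.le⟩
  simp only [Real.sqrt_sq hs0.le] at hK1 hK3 hG ⊢
  have ht1 : 1 < K * s := by rwa [div_lt_iff₀ hs0] at hK1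
  have htr : K * s < Real.sqrt 3 := by rwa [lt_div_iff₀ hs0] at hK3
  have ht3 : (K * s) ^ 2 < 3 := by
    nlinarith [Real.sq_sqrt (show (0:ℝ) ≤ 3 by norm_num), Real.sqrt_nonneg 3]
  have ht2 : K * s < 2 := by nlinarith
  have hden : (0:ℝ) < K ^ 2 * s ^ 2 - 3 * K * s + 3 := by
    nlinarith [sq_nonneg (K * s - 3/2)]
  have hAden : K * s ^ 2 - 2 * s ≠ 0 := by
    have h : K * s ^ 2 - 2 * s = s * (K * s - 2) := by ring
    rw [h]
    exact (mul_neg_of_pos_of_neg hs0 (by linarith)).ne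
  have hKs2 : K * s - 2 ≠ 0 := by
    intro h; nlinarith [h]
  constructor
  · intro b
    have hGb : G b = fun x : ℝ =>
        (-(s^2)) * x^4
        + (s^2 * (K + (2 * K * s - 3) / (K * s ^ 2 - 2 * s)) - b) * x^3
        + (b * (K + (2 * K * s - 3) / (K * s ^ 2 - 2 * s)) - 1
            - s^2 * ((2 * K * s - 3) / (K * s ^ 2 - 2 * s)) * K) * x^2
        + ((K + (2 * K * s - 3) / (K * s ^ 2 - 2 * s))
            - b * ((2 * K * s - 3) / (K * s ^ 2 - 2 * s)) * K) * x
        + (-(((2 * K * s - 3) / (K * s ^ 2 - 2 * s)) * K)) :=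
      funext fun x => by rw [hG]; ring
    rw [hGb, dd_aux]
    have hC1 : (2 / s) * (K ^ 2 * s ^ 2 - 3 * K * s + 3) / (K * s - 2) ≠ 0 :=
      div_ne_zero (mul_ne_zero (div_ne_zero two_ne_zero hs0.ne') hden.ne') hKs2
    have key : 12 * (-(s^2)) * (1 / s)^2
        + 6 * (s^2 * (K + (2 * K * s - 3) / (K * s ^ 2 - 2 * s)) - b) * (1 / s)
        + 2 * (b * (K + (2 * K * s - 3) / (K * s ^ 2 - 2 * s)) - 1
            - s^2 * ((2 * K * s - 3) / (K * s ^ 2 - 2 * s)) * K)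
        = (2 / s) * (K ^ 2 * s ^ 2 - 3 * K * s + 3) / (K * s - 2)
          * (b - (-s * (K ^ 2 * s ^ 2 - 4 * K * s + 5)
              / (K ^ 2 * s ^ 2 - 3 * K * s + 3))) := by
      have hsK : s * K - 2 ≠ 0 := by intro h; apply hKs2; linarith
      have hden' : s * K * (s * K - 3) + 3 ≠ 0 := by intro h; apply hden.ne'; linarith [h]
      field_simp
      ring
    rw [key, mul_eq_zero, sub_eq_zero]
    exact or_iff_right hC1
  · rw [gt_iff_lt, lt_div_iff₀ hden]
    nlinarith [mul_pos hs0 (mul_pos (sub_pos.2 ht1) (sub_pos.2 ht1))]
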